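/- arXiv:2303.10375 — 3 statements merged into one kernel-verified Lean document; each statement's English description precedes it below -/
import Mathlib

section
/- (Verlinde-type trigonometric identity for sl₂ level k fusion.) Let k be a positive integer, θ = π/(k+2), and let 0 ≤ i, j ≤ k. Then sin(θ) · Σ_{l} sin((l+1)θ) = sin((i+1)θ) · sin((j+1)θ), where the sum is over all integers l with |i-j| ≤ l ≤ i+j, i+j+l even, and i+j+l ≤ 2k. -/
open Real Finset

private lemma telescope_sum (θ : ℝ) (d N : ℕ) :
    Real.sin θ * ∑ t ∈ range (N + 1), Real.sin (((d : ℝ) + 2 * t + 1) * θ)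
      = (Real.cos ((d : ℝ) * θ) - Real.cos (((d : ℝ) + 2 * N + 2) * θ)) / 2 := by
  rw [Finset.mul_sum]
  have h : ∀ t ∈ range (N + 1),
      Real.sin θ * Real.sin (((d : ℝ) + 2 * t + 1) * θ)
        = (fun t : ℕ => Real.cos (((d : ℝ) + 2 * t) * θ) / 2) t
          - (fun t : ℕ => Real.cos (((d : ℝ) + 2 * t) * θ) / 2) (t + 1) := by
    intro t _
    have := Real.two_mul_sin_mul_sin (((d : ℝ) + 2 * t + 1) * θ) θ
    simp only
    push_cast
    have e1 : ((d : ℝ) + 2 * t + 1) * θ - θ = ((d : ℝ) + 2 * t) * θ := by ring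
    have e2 : ((d : ℝ) + 2 * t + 1) * θ + θ = ((d : ℝ) + 2 * (t + 1)) * θ := by ring
    rw [e1, e2] at this
    linarith
  rw [Finset.sum_congr rfl h, Finset.sum_range_sub']
  push_cast
  ring_nf

private lemma verlinde_key (k i j : ℕ) (hji : j ≤ i) (hi : i ≤ k) :
    Real.sin (π / (k + 2)) *
      ∑ l ∈ (range (i + j + 1)).filter
          (fun l => i ≤ j + l ∧ j ≤ i + l ∧ Even (i + j + l) ∧ i + j + l ≤ 2 * k),
        Real.sin (((l : ℝ) + 1) * (π / (k + 2))) =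
      Real.sin (((i : ℝ) + 1) * (π / (k + 2))) *
        Real.sin (((j : ℝ) + 1) * (π / (k + 2))) := by
  set θ := π / (k + 2) with hθ
  set d := i - j with hd
  set N := min j (k - i) with hN
  have hset : (range (i + j + 1)).filter
      (fun l => i ≤ j + l ∧ j ≤ i + l ∧ Even (i + j + l) ∧ i + j + l ≤ 2 * k)
      = (range (N + 1)).image (fun t => d + 2 * t) := by
    ext l
    simp only [Finset.mem_filter, Finset.mem_range, Finset.mem_image, Nat.even_iff]
    constructor
    · rintro ⟨h1, h2, h3, h4, h5⟩
      exact ⟨(l - d) / 2, by omega, by omega⟩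
    · rintro ⟨t, ht, rfl⟩
      omega
  rw [hset, Finset.sum_image (by intro a _ b _ h; simp only at h; omega)]
  have hcastd : ((d : ℝ)) = (i : ℝ) - j := by
    rw [hd]; push_cast [hji]; ring
  have hsum : ∀ t ∈ range (N + 1),
      Real.sin ((((d + 2 * t : ℕ) : ℝ) + 1) * θ)
        = Real.sin (((d : ℝ) + 2 * t + 1) * θ) := by
    intro t _; push_cast; ring_nf
  rw [Finset.sum_congr rfl hsum, telescope_sum]
  have hrhs := Real.two_mul_sin_mul_sin (((i : ℝ) + 1) * θ) (((j : ℝ) + 1) * θ)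
  have hk2 : ((k : ℝ) + 2) ≠ 0 := by positivity
  have hcos2 : Real.cos (((d : ℝ) + 2 * N + 2) * θ)
      = Real.cos (((i : ℝ) + j + 2) * θ) := by
    rcases le_total j (k - i) with h | h
    · have : N = j := by omega
      rw [this, hcastd]; ring_nf
    · have hNe : N = k - i := by omega
      have hcastN : ((N : ℝ)) = (k : ℝ) - i := by
        rw [hNe]; push_cast [hi]; ring
      have harg : ((d : ℝ) + 2 * N + 2) * θ = 2 * π - ((i : ℝ) + j + 2) * θ := by
        rw [hcastd, hcastN, hθ]
        field_simp
        ring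
      rw [harg, Real.cos_sub, Real.cos_two_pi, Real.sin_two_pi]
      ring
  rw [hcos2, hcastd]
  have : Real.cos (((i : ℝ) - j) * θ) - Real.cos (((i : ℝ) + j + 2) * θ)
      = 2 * Real.sin (((i : ℝ) + 1) * θ) * Real.sin (((j : ℝ) + 1) * θ) := by
    rw [hrhs]; ring_nf
  rw [this]; ring

open Real Finset in
/-- Verlinde-type trigonometric identity for sl₂ level k fusion: with θ = π/(k+2),
sin θ · Σ_l sin((l+1)θ) = sin((i+1)θ)·sin((j+1)θ), the sum over l with
|i-j| ≤ l ≤ i+j, i+j+l even and i+j+l ≤ 2k. -/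
theorem verlinde_sl2_identity (k : ℕ) (hk : 0 < k) (i j : ℕ) (hi : i ≤ k) (hj : j ≤ k) :
    Real.sin (π / (k + 2)) *
      ∑ l ∈ (range (i + j + 1)).filter
          (fun l => i ≤ j + l ∧ j ≤ i + l ∧ Even (i + j + l) ∧ i + j + l ≤ 2 * k),
        Real.sin (((l : ℝ) + 1) * (π / (k + 2))) =
      Real.sin (((i : ℝ) + 1) * (π / (k + 2))) *
        Real.sin (((j : ℝ) + 1) * (π / (k + 2))) := by
  rcases le_total j i with h | h
  · exact verlinde_key k i j h hi
  · have hswap : (range (i + j + 1)).filter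
        (fun l => i ≤ j + l ∧ j ≤ i + l ∧ Even (i + j + l) ∧ i + j + l ≤ 2 * k)
        = (range (j + i + 1)).filter
        (fun l => j ≤ i + l ∧ i ≤ j + l ∧ Even (j + i + l) ∧ j + i + l ≤ 2 * k) := by
      ext l
      simp only [Finset.mem_filter, Finset.mem_range, Nat.even_iff]
      omega
    rw [hswap, mul_comm (Real.sin (((i : ℝ) + 1) * (π / (k + 2))))]
    exact verlinde_key k j i h hj
end

section
/- (Associativity of the sl₂ level-k fusion coefficients.) For a positive integer k define N : {0,...,k}³ → ℕ by N(i,j,l) = 1 if |i-j| ≤ l ≤ i+j, i+j+l is even, and i+j+l ≤ 2k, and N(i,j,l) = 0 otherwise. Then N(i,j,l) = N(j,i,l) for all i,j,l, and for all i,j,l,m ∈ {0,...,k}: Σ_{p=0}^{k} N(i,j,p)·N(p,l,m) = Σ_{q=0}^{k} N(j,l,q)·N(i,q,m). -/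
set_option maxHeartbeats 4000000

open Finset in
lemma count_parity_interval (a b : ℕ) : ∀ n : ℕ,
    ((range n).filter (fun p => a ≤ p ∧ p ≤ b ∧ p % 2 = a % 2)).card
      = (min (b + 1) n - a + 1) / 2 := by
  intro n
  induction n with
  | zero => simp
  | succ n ih =>
    rw [range_add_one, filter_insert]
    split_ifs with h
    · rw [card_insert_of_notMem (by simp), ih]; omega
    · rw [ih]; omega

open Finset in
/-- The sl₂ level-k fusion coefficients N(i,j,l) (equal to 1 iff |i-j| ≤ l ≤ i+j,
i+j+l even and i+j+l ≤ 2k, else 0) are symmetric and associative: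
Σ_p N(i,j,p)N(p,l,m) = Σ_q N(j,l,q)N(i,q,m). -/
theorem fusion_coefficients_assoc (k : ℕ) (hk : 0 < k)
    (N : ℕ → ℕ → ℕ → ℕ)
    (hN : ∀ i j l, N i j l =
      if i ≤ j + l ∧ j ≤ i + l ∧ l ≤ i + j ∧ Even (i + j + l) ∧ i + j + l ≤ 2 * k
      then 1 else 0) :
    (∀ i j l, i ≤ k → j ≤ k → l ≤ k → N i j l = N j i l) ∧
    (∀ i j l m, i ≤ k → j ≤ k → l ≤ k → m ≤ k →
      ∑ p ∈ range (k + 1), N i j p * N p l m =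
        ∑ q ∈ range (k + 1), N j l q * N i q m) := by
  constructor
  · intro i j l _ _ _
    rw [hN, hN]
    simp only [Nat.even_iff]
    split_ifs <;> omega
  · intro i j l m hi hj hl hm
    -- key computation: such a sum equals a parity-interval count with endpoints a, b
    have key : ∀ x y z w a b : ℕ, x ≤ k → y ≤ k → z ≤ k → w ≤ k →
        (x + y + z + w) % 2 = 0 →
        ((a + y = x ∨ a + x = y ∨ a + w = z ∨ a + z = w) ∧
          x ≤ y + a ∧ y ≤ x + a ∧ z ≤ w + a ∧ w ≤ z + a) →
        ((b = x + y ∨ b = z + w ∨ b + x + y = 2 * k ∨ b + z + w = 2 * k) ∧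
          b ≤ x + y ∧ b ≤ z + w ∧ b + x + y ≤ 2 * k ∧ b + z + w ≤ 2 * k) →
        ∑ p ∈ range (k + 1), N x y p * N p z w = (min (b + 1) (k + 1) - a + 1) / 2 := by
      intro x y z w a b hx hy hz hw hpar ha hb
      rw [← count_parity_interval a b (k + 1), card_filter]
      refine Finset.sum_congr rfl fun p hp => ?_
      rw [hN, hN]
      simp only [Nat.even_iff]
      split_ifs <;> omega
    by_cases hpar : (i + j + l + m) % 2 = 0
    · obtain ⟨a, ha⟩ : ∃ a, ((a + j = i ∨ a + i = j ∨ a + m = l ∨ a + l = m) ∧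
          i ≤ j + a ∧ j ≤ i + a ∧ l ≤ m + a ∧ m ≤ l + a) :=
        ⟨max (max (i - j) (j - i)) (max (l - m) (m - l)), by omega⟩
      obtain ⟨b, hb⟩ : ∃ b, ((b = i + j ∨ b = l + m ∨ b + i + j = 2 * k ∨ b + l + m = 2 * k) ∧
          b ≤ i + j ∧ b ≤ l + m ∧ b + i + j ≤ 2 * k ∧ b + l + m ≤ 2 * k) :=
        ⟨min (min (i + j) (l + m)) (min (2 * k - (i + j)) (2 * k - (l + m))), by omega⟩
      obtain ⟨a', ha'⟩ : ∃ a, ((a + l = j ∨ a + j = l ∨ a + m = i ∨ a + i = m) ∧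
          j ≤ l + a ∧ l ≤ j + a ∧ i ≤ m + a ∧ m ≤ i + a) :=
        ⟨max (max (j - l) (l - j)) (max (i - m) (m - i)), by omega⟩
      obtain ⟨b', hb'⟩ : ∃ b, ((b = j + l ∨ b = i + m ∨ b + j + l = 2 * k ∨ b + i + m = 2 * k) ∧
          b ≤ j + l ∧ b ≤ i + m ∧ b + j + l ≤ 2 * k ∧ b + i + m ≤ 2 * k) :=
        ⟨min (min (j + l) (i + m)) (min (2 * k - (j + l)) (2 * k - (i + m))), by omega⟩
      rw [key i j l m a b hi hj hl hm hpar ha hb]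
      have h2 : (j + l + i + m) % 2 = 0 := by omega
      simp only [show ∀ q, N i q m = N q i m from fun q => by
        rw [hN, hN]; simp only [Nat.even_iff]; split_ifs <;> omega]
      rw [key j l i m a' b' hj hl hi hm h2 ha' hb']
      have hbk : b ≤ k := by omega
      have hbk' : b' ≤ k := by omega
      have dir1 : b' + 2 - a' ≤ b + 2 - a := by
        obtain ⟨ha1, -, -, -, -⟩ := ha
        obtain ⟨hb1, -, -, -, -⟩ := hb
        have h2' := ha'.2
        have h2'' := hb'.2
        rcases ha1 with h|h|h|h <;> rcases hb1 with h'|h'|h'|h' <;> omega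
      have dir2 : b + 2 - a ≤ b' + 2 - a' := by
        obtain ⟨ha1, -, -, -, -⟩ := ha'
        obtain ⟨hb1, -, -, -, -⟩ := hb'
        have h2' := ha.2
        have h2'' := hb.2
        rcases ha1 with h|h|h|h <;> rcases hb1 with h'|h'|h'|h' <;> omega
      omega
    · rw [Finset.sum_eq_zero, Finset.sum_eq_zero]
      · intro q _
        rw [hN, hN]
        simp only [Nat.even_iff]
        split_ifs <;> omega
      · intro p _
        rw [hN, hN]
        simp only [Nat.even_iff]
        split_ifs <;> omega
end

section
/- For a positive integer k ≡ 2 (mod 4), with θ = π/(k+2): (Σ_{l=0, l even}^{k/2 - 1} 2·sin((l+1)θ)) · sin(θ) = 1. Equivalently, the sum of quantum dimensions Σ_{0 ≤ l < k/2, l even} 2·sin((l+1)θ)/sin(θ) equals (1/sin(θ))², which is the product of the quantum dimensions 1/sin(θ) of the modules \overline{L(k,k/2)}^{σ_r,j}. -/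
open Real Finset in
/-- Quantum-dimension identity for k ≡ 2 (mod 4), θ = π/(k+2):
(Σ_{0 ≤ l < k/2, l even} 2 sin((l+1)θ)) · sin θ = 1, i.e. the total quantum
dimension of ⊕_{0≤l<k/2, l even} \overline{L(k,l)}^{σ₃,+} equals (1/sin θ)². -/
theorem sum_qdim_twisted (k : ℕ) (hk : k % 4 = 2) :
    (∑ l ∈ (range (k / 2)).filter (fun l => Even l),
        2 * Real.sin (((l : ℝ) + 1) * (π / (k + 2)))) *
      Real.sin (π / (k + 2)) = 1 := by
  obtain ⟨t, rfl⟩ : ∃ t, k = 4 * t + 2 := ⟨k / 4, by omega⟩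
  set θ : ℝ := π / ((4 * t + 2 : ℕ) + 2) with hθ
  have hfil : (range ((4 * t + 2) / 2)).filter (fun l => Even l)
      = (range (t + 1)).image (fun m => 2 * m) := by
    ext x
    simp only [mem_filter, mem_range, mem_image, Nat.even_iff]
    constructor
    · rintro ⟨hx, he⟩; exact ⟨x / 2, by omega, by omega⟩
    · rintro ⟨m, hm, rfl⟩; omega
  rw [hfil, Finset.sum_image (by intros a _ b _ h; simp only at h; omega), Finset.sum_mul]
  have key : ∀ m ∈ range (t + 1),
      2 * Real.sin ((((2 * m : ℕ) : ℝ) + 1) * θ) * Real.sin θ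
      = Real.cos ((2 * (m : ℝ)) * θ) - Real.cos ((2 * ((m : ℝ) + 1)) * θ) := by
    intro m _
    have h1 : (2 * (m : ℝ)) * θ = (((2 * m : ℕ) : ℝ) + 1) * θ - θ := by
      push_cast; ring
    have h2 : (2 * ((m : ℝ) + 1)) * θ = (((2 * m : ℕ) : ℝ) + 1) * θ + θ := by
      push_cast; ring
    rw [h1, h2, Real.cos_sub, Real.cos_add]
    ring
  rw [Finset.sum_congr rfl key]
  have tele : ∑ m ∈ range (t + 1),
      (Real.cos ((2 * (m : ℝ)) * θ) - Real.cos ((2 * ((m : ℝ) + 1)) * θ))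
      = Real.cos ((2 * (0 : ℝ)) * θ) - Real.cos ((2 * ((t : ℝ) + 1)) * θ) := by
    have := Finset.sum_range_sub' (fun m : ℕ => Real.cos ((2 * (m : ℝ)) * θ)) (t + 1)
    simpa [Nat.cast_add, Nat.cast_one] using this
  rw [tele]
  have hπ2 : (2 * ((t : ℝ) + 1)) * θ = π / 2 := by
    rw [hθ]
    have : (((4 * t + 2 : ℕ) : ℝ) + 2) = 4 * ((t : ℝ) + 1) := by push_cast; ring
    rw [this]
    have h4 : (4 : ℝ) * ((t : ℝ) + 1) ≠ 0 := by positivity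
    field_simp
    ring
  rw [hπ2]
  simp
end
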